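/- For every odd integer n ≥ 1 and every integer k ≥ 1, one has the closed form I_{n,k} = δ(n)·Σ_{j=0}^{k} ((−1)^{k+j} / n^{2(k+1−j)}) · ((2k+1)!/(2j)!) · (π/2)^{2j}. -/

import Mathlib

open Real MeasureTheory

/-- `I_{n,k} = ∫₀^{π/2} t^{2k+1} sin(nt) dt`. -/
noncomputable def I (n k : ℕ) : ℝ :=
  ∫ t in (0:ℝ)..(π / 2), t ^ (2 * k + 1) * Real.sin ((n : ℝ) * t)

/-- `δ(n) = 1` if `n ≡ 1 (mod 4)`, `δ(n) = -1` if `n ≡ 3 (mod 4)`. -/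
noncomputable def delta (n : ℕ) : ℝ := if n % 4 = 1 then 1 else -1

lemma parts_sin (c : ℝ) (hc : c ≠ 0) (m : ℕ) :
    ∫ t in (0:ℝ)..(π/2), t^(m+1) * Real.sin (c*t)
      = -((π/2)^(m+1) * Real.cos (c*(π/2)))/c
        + ((m:ℝ)+1)/c * ∫ t in (0:ℝ)..(π/2), t^m * Real.cos (c*t) := by
  have hu : ∀ x ∈ Set.uIcc (0:ℝ) (π/2), HasDerivAt (fun y : ℝ => y^(m+1)) (((m:ℝ)+1) * x^m) x := by
    intro x _; simpa using hasDerivAt_pow (m+1) x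
  have hv : ∀ x ∈ Set.uIcc (0:ℝ) (π/2),
      HasDerivAt (fun y : ℝ => -Real.cos (c*y)/c) (Real.sin (c*x)) x := by
    intro x _
    have h1 : HasDerivAt (fun y : ℝ => c * y) (c * 1) x := (hasDerivAt_id x).const_mul c
    have := (((Real.hasDerivAt_cos (c*x)).comp x h1).neg).div_const c
    convert this using 1
    all_goals (try rfl)
    field_simp
  have H := intervalIntegral.integral_mul_deriv_eq_deriv_mul hu hv
    (by apply Continuous.intervalIntegrable; fun_prop)
    (by apply Continuous.intervalIntegrable; fun_prop)
  rw [H]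
  rw [show (∫ x in (0:ℝ)..(π/2), ((m:ℝ)+1) * x^m * (-Real.cos (c*x)/c))
      = -(((m:ℝ)+1)/c) * ∫ x in (0:ℝ)..(π/2), x^m * Real.cos (c*x) by
    rw [← intervalIntegral.integral_const_mul]
    apply intervalIntegral.integral_congr; intro x _; field_simp]
  field_simp
  ring

lemma parts_cos (c : ℝ) (hc : c ≠ 0) (m : ℕ) :
    ∫ t in (0:ℝ)..(π/2), t^(m+1) * Real.cos (c*t)
      = ((π/2)^(m+1) * Real.sin (c*(π/2)))/c
        - ((m:ℝ)+1)/c * ∫ t in (0:ℝ)..(π/2), t^m * Real.sin (c*t) := by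
  have hu : ∀ x ∈ Set.uIcc (0:ℝ) (π/2), HasDerivAt (fun y : ℝ => y^(m+1)) (((m:ℝ)+1) * x^m) x := by
    intro x _; simpa using hasDerivAt_pow (m+1) x
  have hv : ∀ x ∈ Set.uIcc (0:ℝ) (π/2),
      HasDerivAt (fun y : ℝ => Real.sin (c*y)/c) (Real.cos (c*x)) x := by
    intro x _
    have h1 : HasDerivAt (fun y : ℝ => c * y) (c * 1) x := (hasDerivAt_id x).const_mul c
    have := ((Real.hasDerivAt_sin (c*x)).comp x h1).div_const c
    convert this using 1
    all_goals (try rfl)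
    field_simp
  have H := intervalIntegral.integral_mul_deriv_eq_deriv_mul hu hv
    (by apply Continuous.intervalIntegrable; fun_prop)
    (by apply Continuous.intervalIntegrable; fun_prop)
  rw [H]
  rw [show (∫ x in (0:ℝ)..(π/2), ((m:ℝ)+1) * x^m * (Real.sin (c*x)/c))
      = (((m:ℝ)+1)/c) * ∫ x in (0:ℝ)..(π/2), x^m * Real.sin (c*x) by
    rw [← intervalIntegral.integral_const_mul]
    apply intervalIntegral.integral_congr; intro x _; field_simp]
  field_simp
  try ring

lemma cos_nat_pi (j : ℕ) : Real.cos ((j:ℝ) * π) = (-1:ℝ)^j := by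
  induction j with
  | zero => simp
  | succ j ih =>
      push_cast
      rw [add_mul, one_mul, Real.cos_add_pi, ih]
      ring

lemma cos_odd_half (n : ℕ) (hno : Odd n) : Real.cos ((n:ℝ) * (π/2)) = 0 := by
  obtain ⟨j, rfl⟩ := hno
  have : ((2*j+1 : ℕ) : ℝ) * (π/2) = (j:ℝ) * π + π/2 := by push_cast; ring
  rw [this, Real.cos_add, Real.cos_pi_div_two, Real.sin_pi_div_two, Real.sin_nat_mul_pi]
  ring

lemma sin_odd_half (n : ℕ) (hno : Odd n) : Real.sin ((n:ℝ) * (π/2)) = delta n := by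
  obtain ⟨j, rfl⟩ := hno
  have : ((2*j+1 : ℕ) : ℝ) * (π/2) = (j:ℝ) * π + π/2 := by push_cast; ring
  rw [this, Real.sin_add, Real.cos_pi_div_two, Real.sin_pi_div_two, Real.sin_nat_mul_pi,
    cos_nat_pi]
  have hd : delta (2*j+1) = (-1:ℝ)^j := by
    rcases Nat.even_or_odd j with hj | hj
    · obtain ⟨i, rfl⟩ := hj
      have h4 : (2*(i+i)+1) % 4 = 1 := by omega
      rw [delta]
      simp [h4, Even.neg_one_pow (⟨i, rfl⟩ : Even (i+i))]
    · obtain ⟨i, rfl⟩ := hj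
      have h4 : (2*(2*i+1)+1) % 4 = 3 := by omega
      rw [delta]
      simp [h4, Odd.neg_one_pow (⟨i, rfl⟩ : Odd (2*i+1))]
  rw [hd]
  ring

lemma I_rec (n k : ℕ) (hn : 1 ≤ n) (hno : Odd n) (hk : 1 ≤ k) :
    I n k = delta n * (2*(k:ℝ)+1) * (π/2)^(2*k) / (n:ℝ)^2
      - (2*(k:ℝ)+1) * (2*(k:ℝ)) / (n:ℝ)^2 * I n (k-1) := by
  have hc : ((n:ℝ)) ≠ 0 := by positivity
  obtain ⟨k, rfl⟩ := Nat.exists_eq_add_of_le hk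
  have h1 : I n (1+k) = ∫ t in (0:ℝ)..(π/2), t^((2*k+1)+1+1) * Real.sin ((n:ℝ)*t) := by
    unfold I
    congr 1; ext t; congr 2; ring
  rw [h1, parts_sin _ hc, parts_cos _ hc, cos_odd_half n hno, sin_odd_half n hno]
  have h2 : I n (1+k-1) = ∫ t in (0:ℝ)..(π/2), t^(2*k+1) * Real.sin ((n:ℝ)*t) := by
    simp only [Nat.add_sub_cancel_left]
    unfold I
    rfl
  rw [h2]
  have h3 : ((2*k+1:ℕ):ℝ) = 2*(k:ℝ)+1 := by push_cast; ring
  push_cast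
  have hpow : ((π:ℝ)/2)^(2*(1+k)) = (π/2)^(2*k+1+1) := by ring_nf
  rw [hpow]
  field_simp
  ring

lemma I_zero (n : ℕ) (hn : 1 ≤ n) (hno : Odd n) : I n 0 = delta n / (n:ℝ)^2 := by
  have hc : ((n:ℝ)) ≠ 0 := by positivity
  have h1 : I n 0 = ∫ t in (0:ℝ)..(π/2), t^(0+1) * Real.sin ((n:ℝ)*t) := rfl
  rw [h1, parts_sin _ hc, cos_odd_half n hno]
  have h2 : (∫ t in (0:ℝ)..(π/2), t^0 * Real.cos ((n:ℝ)*t))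
      = Real.sin ((n:ℝ)*(π/2)) / (n:ℝ) := by
    simp only [pow_zero, one_mul]
    rw [intervalIntegral.integral_comp_mul_left (c := (n:ℝ)) Real.cos hc]
    simp [mul_comm, div_eq_inv_mul]
  rw [h2, sin_odd_half n hno]
  field_simp
  try ring
  try tauto

/-- For odd `n ≥ 1` and `k ≥ 1`:
`I_{n,k} = δ(n) Σ_{j=0}^{k} ((-1)^{k+j} / n^{2(k+1-j)}) ((2k+1)!/(2j)!) (π/2)^{2j}`. -/
theorem I_closed_form (n k : ℕ) (hn : 1 ≤ n) (hno : Odd n) (hk : 1 ≤ k) :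
    I n k = delta n * ∑ j ∈ Finset.range (k + 1),
      ((-1 : ℝ) ^ (k + j) / (n : ℝ) ^ (2 * (k + 1 - j))) *
        ((Nat.factorial (2 * k + 1) : ℝ) / (Nat.factorial (2 * j) : ℝ)) *
        (π / 2) ^ (2 * j) := by
  clear hk
  have hc : ((n:ℝ)) ≠ 0 := by positivity
  induction k with
  | zero =>
      rw [I_zero n hn hno]
      simp [Nat.factorial]
      ring
  | succ k ih =>
      rw [I_rec n (k+1) hn hno (by omega), Nat.add_sub_cancel,
        Finset.sum_range_succ, ih]
      set S := ∑ j ∈ Finset.range (k+1),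
          ((-1:ℝ)^(k+j) / (n:ℝ)^(2*(k+1-j))) *
            ((Nat.factorial (2*k+1):ℝ)/(Nat.factorial (2*j):ℝ)) * (π/2)^(2*j) with hS
      have key : ∀ j ∈ Finset.range (k+1),
          ((-1:ℝ)^(k+1+j) / (n:ℝ)^(2*(k+1+1-j))) *
            ((Nat.factorial (2*(k+1)+1):ℝ)/(Nat.factorial (2*j):ℝ)) * (π/2)^(2*j)
          = (-((2*(k:ℝ)+3)*(2*(k:ℝ)+2)/(n:ℝ)^2)) *
            (((-1:ℝ)^(k+j) / (n:ℝ)^(2*(k+1-j))) *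
              ((Nat.factorial (2*k+1):ℝ)/(Nat.factorial (2*j):ℝ)) * (π/2)^(2*j)) := by
        intro j hj
        simp only [Finset.mem_range] at hj
        have e1 : 2*(k+1+1-j) = 2*(k+1-j) + 2 := by omega
        have e2 : (Nat.factorial (2*(k+1)+1):ℝ)
            = (2*(k:ℝ)+3)*(2*(k:ℝ)+2)*(Nat.factorial (2*k+1):ℝ) := by
          have h : 2*(k+1)+1 = (2*k+1)+1+1 := by omega
          rw [h, Nat.factorial_succ, Nat.factorial_succ]; push_cast; ring
        have e3 : (k+1+j) = (k+j)+1 := by omega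
        rw [e1, e2, e3, pow_succ, pow_add]
        field_simp
        ring
      rw [Finset.sum_congr rfl key, ← Finset.mul_sum, ← hS]
      rw [show 2*(k+1+1-(k+1)) = 2 from by omega, show k+1+(k+1) = 2*(k+1) from by omega]
      have hpow : (-1:ℝ)^(2*(k+1)) = 1 := by rw [pow_mul]; norm_num
      have e2' : (Nat.factorial (2*(k+1)+1):ℝ) = (2*(k:ℝ)+3)*(Nat.factorial (2*(k+1)):ℝ) := by
        rw [Nat.factorial_succ]; push_cast; ring
      have hf : (Nat.factorial (2*(k+1)):ℝ) ≠ 0 := by positivity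
      rw [hpow, e2']
      push_cast
      field_simp
      ring
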